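/- arXiv:2209.13610 — 3 statements merged into one kernel-verified Lean document; each statement's English description precedes it below -/
import Mathlib

section
/- Let a < b, y_a, ỹ_a be real numbers and let f : [a, b] → ℝ be continuous. Define y(x) = y_a + (x - a)·ỹ_a - ∫_a^x (x - s)·f(s) ds for x ∈ [a, b]. Then y is twice differentiable on [a, b] with -y''(x) = f(x) for all x ∈ [a, b], y(a) = y_a, and y'(a) = ỹ_a. -/
theorem stmt_8 (a b ya yta : ℝ) (hab : a < b) (f : ℝ → ℝ)
    (hf : ContinuousOn f (Set.Icc a b)) (y : ℝ → ℝ)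
    (hy : ∀ x, y x = ya + (x - a) * yta - ∫ s in a..x, (x - s) * f s) :
    ∃ y' : ℝ → ℝ,
      (∀ x ∈ Set.Icc a b, HasDerivWithinAt y (y' x) (Set.Icc a b) x) ∧
      (∀ x ∈ Set.Icc a b, HasDerivWithinAt y' (-f x) (Set.Icc a b) x) ∧
      y a = ya ∧ y' a = yta := by
  set g : ℝ → ℝ := Set.IccExtend hab.le (fun p : Set.Icc a b => f p) with hg
  have hgc : Continuous g :=
    Continuous.Icc_extend' (continuousOn_iff_continuous_restrict.1 hf)
  have hgf : ∀ x ∈ Set.Icc a b, g x = f x := fun x hx => by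
    simp [hg, Set.IccExtend_of_mem hab.le _ hx, Set.restrict_apply]
  set F : ℝ → ℝ := fun x => ∫ s in a..x, g s with hF
  set G : ℝ → ℝ := fun x => ∫ s in a..x, s * g s with hG
  have hFd : ∀ x : ℝ, HasDerivAt F (g x) x := fun x =>
    (hgc.integral_hasStrictDerivAt a x).hasDerivAt
  have hGd : ∀ x : ℝ, HasDerivAt G (x * g x) x := fun x =>
    ((continuous_id.mul hgc).integral_hasStrictDerivAt a x).hasDerivAt
  refine ⟨fun x => yta - F x, ?_, ?_, ?_, ?_⟩
  · intro x hx
    -- y agrees with x ↦ ya + (x-a)*yta - (x * F x - G x) on Icc a b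
    have key : ∀ z ∈ Set.Icc a b,
        y z = ya + (z - a) * yta - (z * F z - G z) := by
      intro z hz
      have hsub : Set.uIcc a z ⊆ Set.Icc a b := by
        rw [Set.uIcc_of_le hz.1]
        exact Set.Icc_subset_Icc le_rfl hz.2
      have h1 : (∫ s in a..z, (z - s) * f s) = ∫ s in a..z, (z - s) * g s :=
        intervalIntegral.integral_congr fun s hs => by
          rw [hgf s (hsub hs)]
      have hi1 : IntervalIntegrable (fun s => z * g s) MeasureTheory.volume a z :=
        ((continuous_const.mul hgc)).intervalIntegrable a z
      have hi2 : IntervalIntegrable (fun s => s * g s) MeasureTheory.volume a z :=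
        (continuous_id.mul hgc).intervalIntegrable a z
      have h2 : (∫ s in a..z, (z - s) * g s) = z * F z - G z := by
        have : (∫ s in a..z, (z - s) * g s)
            = ∫ s in a..z, (z * g s - s * g s) := by
          congr 1; ext s; ring
        rw [this, intervalIntegral.integral_sub hi1 hi2,
          intervalIntegral.integral_const_mul]
      rw [hy z, h1, h2]
    have hd : HasDerivAt (fun z => ya + (z - a) * yta - (z * F z - G z))
        (yta - F x) x := by
      have h := (((hasDerivAt_const x ya).add
          (((hasDerivAt_id x).sub (hasDerivAt_const x a)).mul
            (hasDerivAt_const x yta))).sub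
          (((hasDerivAt_id x).mul (hFd x)).sub (hGd x)))
      simp only [id] at h
      exact h.congr_deriv (by ring)
    exact (hd.hasDerivWithinAt).congr key (key x hx)
  · intro x hx
    have hd : HasDerivAt (fun z => yta - F z) (-g x) x := by
      exact ((hasDerivAt_const x yta).sub (hFd x)).congr_deriv (by ring)
    rw [← hgf x hx]
    exact hd.hasDerivWithinAt
  · simp [hy a]
  · simp [hF]
end

section
/- Let ε > 0 and define E(x) = ∫_0^x exp(-t^2/(2ε)) dt and y(x) = cos(π·x) + E(x)/E(1). Then E(1) > 0, y is twice differentiable on ℝ, and for every x ∈ [-1, 1], -ε·y''(x) - x·y'(x) = ε·π^2·cos(π·x) + π·x·sin(π·x); moreover y(-1) = -2 and y(1) = 0. -/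
theorem stmt_15 (ε : ℝ) (hε : 0 < ε) (E y : ℝ → ℝ)
    (hE : ∀ x, E x = ∫ t in (0 : ℝ)..x, Real.exp (-t ^ 2 / (2 * ε)))
    (hy : ∀ x, y x = Real.cos (Real.pi * x) + E x / E 1) :
    0 < E 1 ∧ Differentiable ℝ y ∧ Differentiable ℝ (deriv y) ∧
    (∀ x ∈ Set.Icc (-1 : ℝ) 1,
      -ε * deriv (deriv y) x - x * deriv y x =
        ε * Real.pi ^ 2 * Real.cos (Real.pi * x) + Real.pi * x * Real.sin (Real.pi * x)) ∧
    y (-1) = -2 ∧ y 1 = 0 := by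
  set g : ℝ → ℝ := fun t => Real.exp (-t ^ 2 / (2 * ε)) with hgdef
  have hg : Continuous g := by
    apply Real.continuous_exp.comp
    continuity
  have hE1 : 0 < E 1 := by
    rw [hE]
    exact intervalIntegral.intervalIntegral_pos_of_pos
      (hg.intervalIntegrable 0 1) (fun x => Real.exp_pos _) one_pos
  have hEeq : E = fun x => ∫ t in (0 : ℝ)..x, g t := funext hE
  have hEd : ∀ x, HasDerivAt E (g x) x := by
    intro x
    rw [hEeq]
    exact intervalIntegral.integral_hasDerivAt_right (hg.intervalIntegrable 0 x)
      (hg.stronglyMeasurableAtFilter _ _) hg.continuousAt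
  have hgd : ∀ x, HasDerivAt g (-x / ε * g x) x := by
    intro x
    have h1 : HasDerivAt (fun t : ℝ => -t ^ 2 / (2 * ε)) (-x / ε) x := by
      have := ((hasDerivAt_pow 2 x).neg).div_const (2 * ε)
      refine this.congr_deriv ?_
      field_simp
      ring
    have := (Real.hasDerivAt_exp (-x ^ 2 / (2 * ε))).comp x h1
    refine this.congr_deriv ?_
    simp [hgdef]
    ring
  have hcd : ∀ x : ℝ, HasDerivAt (fun x => Real.cos (Real.pi * x))
      (-Real.pi * Real.sin (Real.pi * x)) x := by
    intro x
    have h1 : HasDerivAt (fun x : ℝ => Real.pi * x) Real.pi x := by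
      simpa using (hasDerivAt_id x).const_mul Real.pi
    have := (Real.hasDerivAt_cos (Real.pi * x)).comp x h1
    refine this.congr_deriv ?_
    ring
  have hsd : ∀ x : ℝ, HasDerivAt (fun x => Real.sin (Real.pi * x))
      (Real.pi * Real.cos (Real.pi * x)) x := by
    intro x
    have h1 : HasDerivAt (fun x : ℝ => Real.pi * x) Real.pi x := by
      simpa using (hasDerivAt_id x).const_mul Real.pi
    have := (Real.hasDerivAt_sin (Real.pi * x)).comp x h1
    refine this.congr_deriv ?_
    ring
  set y1 : ℝ → ℝ := fun x => -Real.pi * Real.sin (Real.pi * x) + g x / E 1 with hy1def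
  set y2 : ℝ → ℝ := fun x =>
    -Real.pi * (Real.pi * Real.cos (Real.pi * x)) + (-x / ε * g x) / E 1 with hy2def
  have hyd : ∀ x, HasDerivAt y (y1 x) x := by
    intro x
    have : HasDerivAt (fun x => Real.cos (Real.pi * x) + E x / E 1) (y1 x) x :=
      (hcd x).add ((hEd x).div_const (E 1))
    exact this.congr_of_eventuallyEq (Filter.Eventually.of_forall fun t => (hy t))
  have hy1d : ∀ x, HasDerivAt y1 (y2 x) x := by
    intro x
    exact ((hsd x).const_mul (-Real.pi)).add ((hgd x).div_const (E 1))
  have hderivy : deriv y = y1 := funext fun x => (hyd x).deriv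
  have hderivy1 : deriv y1 = y2 := funext fun x => (hy1d x).deriv
  refine ⟨hE1, fun x => (hyd x).differentiableAt, ?_, ?_, ?_, ?_⟩
  · rw [hderivy]
    exact fun x => (hy1d x).differentiableAt
  · intro x _
    rw [hderivy, hderivy1, hy1def, hy2def]
    simp only
    field_simp
    ring
  · have hEneg : E (-1) = -E 1 := by
      rw [hE (-1), hE 1]
      have heven : ∀ t : ℝ, g (-t) = g t := by
        intro t; simp [hgdef]
      calc (∫ t in (0:ℝ)..(-1), g t) = ∫ t in (0:ℝ)..(-1), g (-t) := by
            simp_rw [heven]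
        _ = ∫ t in (1:ℝ)..0, g t := by
            simpa using intervalIntegral.integral_comp_neg g (a := 0) (b := -1)
        _ = -∫ t in (0:ℝ)..1, g t := intervalIntegral.integral_symm 0 1
    rw [hy]
    rw [hEneg]
    have : Real.pi * (-1 : ℝ) = -Real.pi := by ring
    rw [this, Real.cos_neg, Real.cos_pi, neg_div, div_self hE1.ne']
    norm_num
  · rw [hy]
    simp [Real.cos_pi]
    rw [div_self hE1.ne']; norm_num
end

section
/- Let a < b and let I_1, …, I_K be closed subintervals covering [a, b]. For each k ∈ {1, …, K}, let x_{1,k}, …, x_{m_k,k} be distinct nodes in I_k with Lagrange basis polynomials u_{j,k} (so that u_{j,k}(x_{l,k}) = 1 if j = l and 0 otherwise). Let y : [a, b] → ℝ, let y_h be the piecewise interpolant defined on each I_k by y_h(x) = ∑_{j=1}^{m_k} y(x_{j,k})·u_{j,k}(x), and let y_c be defined on each I_k by y_c(x) = ∑_{j=1}^{m_k} c_{j,k}·u_{j,k}(x) for given real coefficients c_{j,k}. Let m̄ = max_k m_k, and suppose: (i) sup_{x∈[a,b]} |y(x) - y_h(x)| ≤ K·E for some E ≥ 0; (ii) for every k,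 sup_{x∈I_k} ∑_{j=1}^{m_k} |u_{j,k}(x)| ≤ (1/π)·ln(m̄) + 1.07618; and (iii) |c_{j,k} - y(x_{j,k})| ≤ δ/K for all j, k, where δ ≥ 0. Then sup_{x∈[a,b]} |y(x) - y_c(x)| ≤ K·E + δ·((1/π)·ln(m̄) + 1.07618). -/
theorem stmt_17 (a b : ℝ) (hab : a < b) (K : ℕ) (hK : 0 < K)
    (I : Fin K → Set ℝ) (c d : Fin K → ℝ)
    (hI : ∀ k, I k = Set.Icc (c k) (d k))
    (hsub : ∀ k, I k ⊆ Set.Icc a b)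
    (hcover : Set.Icc a b ⊆ ⋃ k, I k)
    (m : Fin K → ℕ) (hm : ∀ k, 0 < m k)
    (x : (k : Fin K) → Fin (m k) → ℝ)
    (hxmem : ∀ k j, x k j ∈ I k)
    (hxinj : ∀ k, Function.Injective (x k))
    (u : (k : Fin K) → Fin (m k) → ℝ → ℝ)
    (hlag : ∀ k j l, u k j (x k l) = if j = l then (1 : ℝ) else 0)
    (y yh yc : ℝ → ℝ) (coef : (k : Fin K) → Fin (m k) → ℝ)
    (hyh : ∀ k, ∀ t ∈ I k, yh t = ∑ j, y (x k j) * u k j t)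
    (hyc : ∀ k, ∀ t ∈ I k, yc t = ∑ j, coef k j * u k j t)
    (mbar : ℕ) (hmbar : mbar = Finset.univ.sup m)
    (E δ : ℝ) (hE : 0 ≤ E) (hδ : 0 ≤ δ)
    (hi : ∀ t ∈ Set.Icc a b, |y t - yh t| ≤ K * E)
    (hii : ∀ k, ∀ t ∈ I k,
      (∑ j, |u k j t|) ≤ (1 / Real.pi) * Real.log mbar + 1.07618)
    (hiii : ∀ k j, |coef k j - y (x k j)| ≤ δ / K) :
    ∀ t ∈ Set.Icc a b,
      |y t - yc t| ≤ K * E + δ * ((1 / Real.pi) * Real.log mbar + 1.07618) := by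
  intro t ht
  obtain ⟨k, hk⟩ := Set.mem_iUnion.mp (hcover ht)
  set L : ℝ := (1 / Real.pi) * Real.log mbar + 1.07618
  have hL0 : 0 ≤ L := le_trans (Finset.sum_nonneg fun j _ => abs_nonneg _) (hii k t hk)
  have h1 : |y t - yh t| ≤ K * E := hi t ht
  have h2 : |yh t - yc t| ≤ δ * L := by
    rw [hyh k t hk, hyc k t hk, ← Finset.sum_sub_distrib]
    calc |∑ j, (y (x k j) * u k j t - coef k j * u k j t)|
        ≤ ∑ j, |y (x k j) * u k j t - coef k j * u k j t| :=
          Finset.abs_sum_le_sum_abs _ _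
      _ ≤ ∑ j, (δ / K) * |u k j t| := by
          apply Finset.sum_le_sum
          intro j _
          rw [← sub_mul, abs_mul]
          exact mul_le_mul_of_nonneg_right (by rw [abs_sub_comm]; exact hiii k j) (abs_nonneg _)
      _ = (δ / K) * ∑ j, |u k j t| := by rw [Finset.mul_sum]
      _ ≤ (δ / K) * L := by
          exact mul_le_mul_of_nonneg_left (hii k t hk) (div_nonneg hδ (Nat.cast_nonneg K))
      _ ≤ δ * L := by
          apply mul_le_mul_of_nonneg_right _ hL0
          apply div_le_self hδ
          exact_mod_cast hK
  calc |y t - yc t| ≤ |y t - yh t| + |yh t - yc t| := abs_sub_le _ _ _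
    _ ≤ K * E + δ * L := add_le_add h1 h2
end
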